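/- There exists at most one sequence of elements A_k ∈ QMod (k ≥ 0) satisfying: (a) A_k has weight 2k and (d/dG_2) A_k = 2 A_{k−1} (with A_{−1} := 0); (b) for each n ≥ 0 there is a polynomial p_n of degree ≤ 2n with [A_k]_{q^n} = p_n(k)/((−4)^k (2k+1)!!) for all k ≥ n; and (c) A_0 = 1 + O(q). In fact these conditions force A_0 = 1 and determine each A_k inductively. -/

import Mathlib

open MvPolynomial

/-- Uniqueness of the series `A_k`: modelling `QMod = ℂ[G₂,G₄,G₆]` as the polynomial
ring `ℂ[X₀,X₁,X₂]` with weights `2,4,6`, `Φ` the `q`-expansion algebra homomorphism,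
and assuming the vanishing lemma for modular forms (elements of `ℂ[G₄,G₆]`), any two
sequences `A, A'` satisfying (a) weight `2k` and `(d/dG₂) A_k = 2 A_(k-1)` (with
`A_(-1)=0`), (b) the polynomiality of Fourier coefficients
`[A_k]_(q^n) = p_n(k) / ((-4)^k (2k+1)!!)` for `k ≥ n` with `deg p_n ≤ 2n`, and
(c) `A₀ = 1 + O(q)`, coincide; moreover the conditions force `A₀ = 1`. -/
private lemma coeff_pderiv' {σ : Type*} {R : Type*} [CommSemiring R] [DecidableEq σ]
    (i : σ) (f : MvPolynomial σ R) (m : σ →₀ ℕ) :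
    coeff m (pderiv i f) = ((m i + 1 : ℕ) : R) * coeff (m + Finsupp.single i 1) f := by
  induction f using MvPolynomial.induction_on' with
  | add p q hp hq => simp [hp, hq, mul_add]
  | monomial d a =>
    rw [pderiv_monomial, coeff_monomial, coeff_monomial]
    split_ifs with h1 h2 h2
    · subst h2
      simp [mul_comm]
    · have hdi : d i = 0 := by
        by_contra hne
        exact h2 ((tsub_eq_iff_eq_add_of_le
          (Finsupp.single_le_iff.mpr (Nat.one_le_iff_ne_zero.mpr hne))).1 h1)
      simp [hdi]
    · exact absurd (h2 ▸ add_tsub_cancel_right m (Finsupp.single i 1)) h1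
    · simp

private lemma mem_adjoin_of_pd {f : MvPolynomial (Fin 3) ℂ} (h : pderiv 0 f = 0) :
    f ∈ Algebra.adjoin ℂ {X 1, X 2} := by
  have himg : ({X 1, X 2} : Set (MvPolynomial (Fin 3) ℂ)) = X '' {1, 2} := by
    simp [Set.image_insert_eq]
  rw [himg, ← supported_eq_adjoin_X, mem_supported]
  intro i hi
  simp only [Finset.coe_insert, Set.mem_insert_iff, Finset.coe_singleton] at *
  obtain ⟨d, hd, hdi⟩ := (mem_vars i).1 hi
  by_cases h0 : i = (0 : Fin 3)
  · exfalso
    subst h0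
    have hd0 : d 0 ≠ 0 := Finsupp.mem_support_iff.1 hdi
    have hkey := coeff_pderiv' (0 : Fin 3) f (d - Finsupp.single 0 1)
    rw [h, tsub_add_cancel_of_le
      (Finsupp.single_le_iff.mpr (Nat.one_le_iff_ne_zero.mpr hd0))] at hkey
    have h1 : ((d - Finsupp.single (0 : Fin 3) 1) : Fin 3 →₀ ℕ) 0 + 1 = d 0 := by
      rw [Finsupp.tsub_apply, Finsupp.single_apply, if_pos rfl]
      omega
    rw [h1] at hkey
    rw [coeff_zero] at hkey
    rcases mul_eq_zero.1 hkey.symm with h' | h'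
    · exact hd0 (Nat.cast_eq_zero.mp h')
    · exact Finsupp.mem_support_iff.1 hd h'
  · fin_cases i <;> simp_all

theorem stmt_6
    (Φ : MvPolynomial (Fin 3) ℂ →ₐ[ℂ] PowerSeries ℂ)
    (hvan : ∀ (k : ℕ) (f : MvPolynomial (Fin 3) ℂ),
      f ∈ weightedHomogeneousSubmodule ℂ (![2, 4, 6] : Fin 3 → ℕ) k →
      f ∈ Algebra.adjoin ℂ {X 1, X 2} →
      (∀ ℓ : ℕ, ℓ ≤ k / 12 → PowerSeries.coeff (R := ℂ) ℓ (Φ f) = 0) → f = 0)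
    (A A' : ℕ → MvPolynomial (Fin 3) ℂ)
    (hwt : ∀ k, A k ∈ weightedHomogeneousSubmodule ℂ (![2, 4, 6] : Fin 3 → ℕ) (2 * k))
    (hd0 : pderiv 0 (A 0) = 0)
    (hd : ∀ k : ℕ, pderiv 0 (A (k + 1)) = 2 * A k)
    (hb : ∀ n : ℕ, ∃ p : Polynomial ℂ, p.natDegree ≤ 2 * n ∧
      ∀ k : ℕ, n ≤ k → PowerSeries.coeff (R := ℂ) n (Φ (A k)) =
        Polynomial.eval (k : ℂ) p /
          ((-4 : ℂ) ^ k * (Nat.doubleFactorial (2 * k + 1) : ℂ)))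
    (hc : PowerSeries.coeff (R := ℂ) 0 (Φ (A 0)) = 1)
    (hwt' : ∀ k, A' k ∈ weightedHomogeneousSubmodule ℂ (![2, 4, 6] : Fin 3 → ℕ) (2 * k))
    (hd0' : pderiv 0 (A' 0) = 0)
    (hd' : ∀ k : ℕ, pderiv 0 (A' (k + 1)) = 2 * A' k)
    (hb' : ∀ n : ℕ, ∃ p : Polynomial ℂ, p.natDegree ≤ 2 * n ∧
      ∀ k : ℕ, n ≤ k → PowerSeries.coeff (R := ℂ) n (Φ (A' k)) =
        Polynomial.eval (k : ℂ) p /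
          ((-4 : ℂ) ^ k * (Nat.doubleFactorial (2 * k + 1) : ℂ)))
    (hc' : PowerSeries.coeff (R := ℂ) 0 (Φ (A' 0)) = 1) :
    A 0 = 1 ∧ ∀ k, A k = A' k := by
  have habs : ∀ k, A k = A' k := by
    intro k
    induction k using Nat.strong_induction_on with
    | _ k IH =>
      have hmem : A k - A' k ∈
          weightedHomogeneousSubmodule ℂ (![2, 4, 6] : Fin 3 → ℕ) (2 * k) :=
        Submodule.sub_mem _ (hwt k) (hwt' k)
      have hdz : pderiv 0 (A k - A' k) = 0 := by
        cases k with
        | zero => rw [map_sub, hd0, hd0', sub_zero]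
        | succ m => rw [map_sub, hd m, hd' m, IH m (Nat.lt_succ_self m), sub_self]
      have hzero : A k - A' k = 0 := by
        apply hvan (2 * k) _ hmem (mem_adjoin_of_pd hdz)
        intro ℓ hℓ
        rw [map_sub, map_sub, sub_eq_zero]
        have h6 : 6 * ℓ ≤ k := by
          have := (Nat.le_div_iff_mul_le (by norm_num : 0 < 12)).1 hℓ
          omega
        obtain ⟨p, hpdeg, hpev⟩ := hb ℓ
        obtain ⟨p', hpdeg', hpev'⟩ := hb' ℓ
        rcases Nat.eq_zero_or_pos k with hk0 | hk0
        · subst hk0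
          have hℓ0 : ℓ = 0 := by omega
          subst hℓ0
          rw [hc, hc']
        · have hℓk : ℓ ≤ k := by omega
          have hq : p - p' = 0 := by
            apply Polynomial.eq_zero_of_natDegree_lt_card_of_eval_eq_zero' _
              ((Finset.Icc ℓ (k - 1)).image (Nat.cast : ℕ → ℂ))
            · intro x hx
              simp only [Finset.mem_image, Finset.mem_Icc] at hx
              obtain ⟨j, ⟨hj1, hj2⟩, rfl⟩ := hx
              have hjk : j < k := by omega
              have hD : ((-4 : ℂ) ^ j * (Nat.doubleFactorial (2 * j + 1) : ℂ)) ≠ 0 :=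
                mul_ne_zero (pow_ne_zero _ (by norm_num))
                  (Nat.cast_ne_zero.mpr (Nat.doubleFactorial_pos _).ne')
              have heq : Polynomial.eval (j : ℂ) p /
                    ((-4 : ℂ) ^ j * (Nat.doubleFactorial (2 * j + 1) : ℂ)) =
                  Polynomial.eval (j : ℂ) p' /
                    ((-4 : ℂ) ^ j * (Nat.doubleFactorial (2 * j + 1) : ℂ)) := by
                rw [← hpev j hj1, ← hpev' j hj1, IH j hjk]
              rw [div_eq_div_iff hD hD] at heq
              have : Polynomial.eval (j : ℂ) p = Polynomial.eval (j : ℂ) p' :=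
                mul_right_cancel₀ hD heq
              rw [Polynomial.eval_sub, this, sub_self]
            · rw [Finset.card_image_of_injective _ Nat.cast_injective, Nat.card_Icc]
              have hdeg : (p - p').natDegree ≤ 2 * ℓ :=
                le_trans (Polynomial.natDegree_sub_le p p') (by omega)
              omega
          have hpk : Polynomial.eval ((k : ℕ) : ℂ) p = Polynomial.eval ((k : ℕ) : ℂ) p' := by
            rw [sub_eq_zero.mp hq]
          rw [hpev k hℓk, hpev' k hℓk, hpk]
      exact sub_eq_zero.mp hzero
  refine ⟨?_, habs⟩
  have h1 : A 0 - 1 = 0 := by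
    apply hvan 0 _ (Submodule.sub_mem _ (hwt 0)
      ((mem_weightedHomogeneousSubmodule _ _ _ _).mpr (isWeightedHomogeneous_one ℂ _)))
      (mem_adjoin_of_pd (by rw [map_sub, hd0, pderiv_one, sub_zero]))
    intro ℓ hℓ
    have hℓ0 : ℓ = 0 := by simpa using hℓ
    subst hℓ0
    rw [map_sub, map_sub, map_one, hc]
    simp
  exact sub_eq_zero.mp h1
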